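/- Let ρ < 0 be a real number. The total number of ρ-avoided words w in x with |w| > 2 (of any length, occurring or absent) is at most σ·n + 2n. -/

import Mathlib

/-- The observed frequency `f(w)`: the number of starting positions at which
the word `w` occurs in the word `x` (occurrences may overlap). -/
def occ {α : Type*} [DecidableEq α] (x w : List α) : ℕ :=
  ((Finset.range (x.length + 1)).filter (fun i => (x.drop i).take w.length = w)).card

/-- The expected frequency `E(w)` of `w` in `x`:
`E(w) = f(w_p)·f(w_s)/f(w_i)` if `f(w_i) > 0`, and `E(w) = 0` otherwise,
where `w_p = w.dropLast` is the longest proper prefix of `w`,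
`w_s = w.tail` is the longest proper suffix of `w`, and
`w_i = w.tail.dropLast` is the infix of `w` obtained by deleting its
first and last letters. -/
noncomputable def expFreq {α : Type*} [DecidableEq α] (x w : List α) : ℝ :=
  if 0 < occ x w.tail.dropLast then
    ((occ x w.dropLast : ℝ) * (occ x w.tail : ℝ)) / (occ x w.tail.dropLast : ℝ)
  else 0

/-- The standard deviation `std(w) = (f(w) − E(w)) / max(√E(w), 1)`. -/
noncomputable def stdDev {α : Type*} [DecidableEq α] (x w : List α) : ℝ :=
  ((occ x w : ℝ) - expFreq x w) / max (Real.sqrt (expFreq x w)) 1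

/-- `w` is a minimal absent word of `x`: `w` is absent from `x`
(`f(w) = 0`) and every proper factor of `w` occurs in `x`. -/
def IsMAW {α : Type*} [DecidableEq α] (x w : List α) : Prop :=
  occ x w = 0 ∧ ∀ v : List α, v <:+: w → v ≠ w → 0 < occ x v

set_option linter.unusedSectionVars false

namespace Stmt17Aux

variable {α : Type*} [DecidableEq α]

/-- The set of starting positions of occurrences of `w` in `x`. -/
def SP (x w : List α) : Finset ℕ :=
  (Finset.range (x.length + 1)).filter (fun i => w <+: x.drop i)

lemma occ_eq_card_SP (x w : List α) : occ x w = (SP x w).card := by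
  unfold occ SP
  congr 1
  apply Finset.filter_congr
  intro i _
  constructor
  · intro h; rw [List.prefix_iff_eq_take]; exact h.symm
  · intro h; exact (List.prefix_iff_eq_take.mp h).symm

lemma mem_SP {x w : List α} {i : ℕ} : i ∈ SP x w ↔ i ≤ x.length ∧ w <+: x.drop i := by
  unfold SP
  rw [Finset.mem_filter, Finset.mem_range, Nat.lt_succ_iff]


lemma length_add_le_of_mem_SP {x w : List α} {i : ℕ} (h : i ∈ SP x w) :
    i + w.length ≤ x.length := by
  obtain ⟨hi, hp⟩ := mem_SP.mp h
  have := hp.length_le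
  rw [List.length_drop] at this
  omega

lemma SP_mono {x u w : List α} (h : u <+: w) : SP x w ⊆ SP x u := by
  intro i hi
  rw [mem_SP] at hi ⊢
  exact ⟨hi.1, h.trans hi.2⟩

lemma occ_le_of_prefix {x u w : List α} (h : u <+: w) : occ x w ≤ occ x u := by
  rw [occ_eq_card_SP, occ_eq_card_SP]
  exact Finset.card_le_card (SP_mono h)

lemma cons_prefix_drop {x u : List α} {a : α} {i : ℕ} (h : (a :: u) <+: x.drop i) :
    i < x.length ∧ u <+: x.drop (i + 1) := by
  obtain ⟨t, ht⟩ := h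
  have hlen : x.length - i = (a :: u ++ t).length := by
    rw [← List.length_drop, ht]
  simp at hlen
  constructor
  · omega
  · have h2 := congrArg (List.drop 1) ht
    rw [List.drop_drop] at h2
    simp only [List.cons_append, List.drop_one, List.tail_cons] at h2
    exact ⟨t, h2⟩

lemma mem_SP_succ_of_cons {x u : List α} {a : α} {i : ℕ} (h : i ∈ SP x (a :: u)) :
    i + 1 ∈ SP x u := by
  obtain ⟨hi, hp⟩ := mem_SP.mp h
  obtain ⟨hlt, hp'⟩ := cons_prefix_drop hp
  exact mem_SP.mpr ⟨by omega, hp'⟩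

lemma occ_cons_le {x u : List α} {a : α} : occ x (a :: u) ≤ occ x u := by
  rw [occ_eq_card_SP, occ_eq_card_SP]
  apply Finset.card_le_card_of_injOn (fun i => i + 1)
  · intro i hi; exact mem_SP_succ_of_cons hi
  · intro i _ j _ hij
    simpa using hij


lemma drop_eq_cons_of_mem_SP {x u : List α} {a : α} {i : ℕ} (h : i ∈ SP x (a :: u)) :
    ∃ t, x.drop i = a :: u ++ t := by
  obtain ⟨hi, t, ht⟩ := mem_SP.mp h
  exact ⟨t, ht.symm⟩

/-- Two occurrences of `a::v` and `a'::v` (distinct first letters) shifted by one give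
disjoint sets of occurrences of `v`, hence the sum bound. -/
lemma occ_cons_add_occ_cons_le {x v : List α} {a a' : α} (hne : a ≠ a') :
    occ x (a :: v) + occ x (a' :: v) ≤ occ x v := by
  have key : ((SP x (a :: v)).image (· + 1)) ∪ ((SP x (a' :: v)).image (· + 1)) ⊆ SP x v := by
    intro j hj
    rcases Finset.mem_union.mp hj with hj | hj <;>
    · obtain ⟨i, hi, rfl⟩ := Finset.mem_image.mp hj
      exact mem_SP_succ_of_cons hi
  have hdisj : Disjoint ((SP x (a :: v)).image (· + 1)) ((SP x (a' :: v)).image (· + 1)) := by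
    rw [Finset.disjoint_left]
    intro j hj hj'
    obtain ⟨i, hi, rfl⟩ := Finset.mem_image.mp hj
    obtain ⟨i', hi', hii⟩ := Finset.mem_image.mp hj'
    have : i' = i := by omega
    subst this
    obtain ⟨t, ht⟩ := drop_eq_cons_of_mem_SP hi
    obtain ⟨t', ht'⟩ := drop_eq_cons_of_mem_SP hi'
    rw [ht] at ht'
    exact hne (by injection ht')
  calc occ x (a :: v) + occ x (a' :: v)
      = ((SP x (a :: v)).image (· + 1)).card + ((SP x (a' :: v)).image (· + 1)).card := by
        rw [occ_eq_card_SP, occ_eq_card_SP,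
          Finset.card_image_of_injective _ (add_left_injective 1),
          Finset.card_image_of_injective _ (add_left_injective 1)]
    _ = (((SP x (a :: v)).image (· + 1)) ∪ ((SP x (a' :: v)).image (· + 1))).card :=
        (Finset.card_union_of_disjoint hdisj).symm
    _ ≤ (SP x v).card := Finset.card_le_card key
    _ = occ x v := (occ_eq_card_SP x v).symm

/-- Inclusion–exclusion: `f(av) + f(vb) ≤ f(v) + f(avb)`. -/
lemma occ_incl_excl (x v : List α) (a b : α) :
    occ x (a :: v) + occ x (v ++ [b]) ≤ occ x v + occ x (a :: (v ++ [b])) := by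
  classical
  set A1 := (SP x (a :: v)).image (· + 1) with hA1
  set B1 := SP x (v ++ [b]) with hB1
  have hA1card : A1.card = occ x (a :: v) := by
    rw [hA1, Finset.card_image_of_injective _ (add_left_injective 1), occ_eq_card_SP]
  have hB1card : B1.card = occ x (v ++ [b]) := (occ_eq_card_SP x _).symm
  have hsub : A1 ∪ B1 ⊆ SP x v := by
    intro j hj
    rcases Finset.mem_union.mp hj with hj | hj
    · obtain ⟨i, hi, rfl⟩ := Finset.mem_image.mp hj
      exact mem_SP_succ_of_cons hi
    · exact SP_mono (List.prefix_append v [b]) hj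
  have hint : A1 ∩ B1 ⊆ (SP x (a :: (v ++ [b]))).image (· + 1) := by
    intro j hj
    obtain ⟨hjA, hjB⟩ := Finset.mem_inter.mp hj
    obtain ⟨i, hi, rfl⟩ := Finset.mem_image.mp hjA
    obtain ⟨t, ht⟩ := drop_eq_cons_of_mem_SP hi
    -- x.drop i = a :: v ++ t ; and (v ++ [b]) <+: x.drop (i+1) = v ++ t
    have hdrop1 : x.drop (i + 1) = v ++ t := by
      have h2 := congrArg (List.drop 1) ht
      rw [List.drop_drop] at h2
      simpa using h2
    have hpre : (v ++ [b]) <+: v ++ t := by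
      have := (mem_SP.mp hjB).2
      rwa [hdrop1] at this
    have hb : [b] <+: t := (List.prefix_append_right_inj v).mp hpre
    obtain ⟨t', ht'⟩ := hb
    apply Finset.mem_image.mpr
    refine ⟨i, ?_, rfl⟩
    apply mem_SP.mpr
    refine ⟨(mem_SP.mp hi).1, ⟨t', ?_⟩⟩
    rw [ht, ← ht']
    simp
  have hintcard : (A1 ∩ B1).card ≤ occ x (a :: (v ++ [b])) := by
    calc (A1 ∩ B1).card ≤ ((SP x (a :: (v ++ [b]))).image (· + 1)).card :=
          Finset.card_le_card hint
      _ = occ x (a :: (v ++ [b])) := by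
          rw [Finset.card_image_of_injective _ (add_left_injective 1), occ_eq_card_SP]
  calc occ x (a :: v) + occ x (v ++ [b]) = A1.card + B1.card := by rw [hA1card, hB1card]
    _ = (A1 ∪ B1).card + (A1 ∩ B1).card := (Finset.card_union_add_card_inter A1 B1).symm
    _ ≤ (SP x v).card + occ x (a :: (v ++ [b])) :=
        Nat.add_le_add (Finset.card_le_card hsub) hintcard
    _ = occ x v + occ x (a :: (v ++ [b])) := by rw [← occ_eq_card_SP x v]

/-- Bound for laminar families of sets of size at least two: at most `|U| - 1` sets. -/
lemma laminar_bound : ∀ (k : ℕ) (U : Finset ℕ) (F : Finset (Finset ℕ)),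
    U.card ≤ k →
    (∀ E ∈ F, E ⊆ U ∧ 2 ≤ E.card) →
    (∀ E ∈ F, ∀ E' ∈ F, E ⊆ E' ∨ E' ⊆ E ∨ Disjoint E E') →
    F.Nonempty → F.card < U.card := by
  intro k
  induction k with
  | zero =>
    intro U F hUk hmem _ hne
    obtain ⟨E, hE⟩ := hne
    have h2 := (hmem E hE).2
    have := Finset.card_le_card (hmem E hE).1
    omega
  | succ k ih =>
    intro U F hUk hmem hlam hne
    obtain ⟨E₀, hE₀, hmin⟩ := Finset.exists_min_image F Finset.card hne
    have hE₀2 : 2 ≤ E₀.card := (hmem E₀ hE₀).2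
    obtain ⟨e, he, f, hf, hef⟩ := Finset.one_lt_card.mp (lt_of_lt_of_le one_lt_two hE₀2)
    have heU : e ∈ U := (hmem E₀ hE₀).1 he
    -- every other member containing e contains E₀
    have hsup : ∀ E ∈ F.erase E₀, e ∈ E → E₀ ⊆ E := by
      intro E hE heE
      have hEF : E ∈ F := Finset.mem_of_mem_erase hE
      have hEne : E ≠ E₀ := Finset.ne_of_mem_erase hE
      rcases hlam E hEF E₀ hE₀ with h | h | h
      · have := hmin E hEF
        have := Finset.eq_of_subset_of_card_le h this
        exact absurd this hEne
      · exact h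
      · exact absurd (Finset.disjoint_left.mp h heE he) (fun hc => hc)
    -- injectivity of erasing e on F.erase E₀
    have hinj : Set.InjOn (fun E : Finset ℕ => E.erase e) ((F.erase E₀) : Set (Finset ℕ)) := by
      intro E₁ h₁ E₂ h₂ h12
      simp only [Finset.mem_coe] at h₁ h₂
      simp only at h12
      by_cases he₁ : e ∈ E₁ <;> by_cases he₂ : e ∈ E₂
      · ext y
        by_cases hy : y = e
        · subst hy; simp [he₁, he₂]
        · constructor
          · intro hyE
            have : y ∈ E₁.erase e := Finset.mem_erase.mpr ⟨hy, hyE⟩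
            rw [h12] at this
            exact Finset.mem_of_mem_erase this
          · intro hyE
            have : y ∈ E₂.erase e := Finset.mem_erase.mpr ⟨hy, hyE⟩
            rw [← h12] at this
            exact Finset.mem_of_mem_erase this
      · exfalso
        -- e ∈ E₁, e ∉ E₂ : then E₂ = E₁.erase e
        have hE₂eq : E₂ = E₁.erase e := by
          rw [h12]; exact (Finset.erase_eq_of_notMem he₂).symm
        have hsub1 : E₀ ⊆ E₁ := hsup E₁ h₁ he₁
        obtain ⟨f', hf'E₀, hf'e⟩ : ∃ f', f' ∈ E₀ ∧ f' ≠ e := by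
          rcases eq_or_ne e f with rfl | hnef
          · exact absurd rfl hef
          · by_cases hcase : e = f
            · exact absurd hcase hnef
            · exact ⟨f, hf, fun hc => hef (by rw [hc])⟩
        have hf'E₂ : f' ∈ E₂ := by
          rw [hE₂eq]
          exact Finset.mem_erase.mpr ⟨hf'e, hsub1 hf'E₀⟩
        have hE₂F : E₂ ∈ F := Finset.mem_of_mem_erase h₂
        rcases hlam E₂ hE₂F E₀ hE₀ with h | h | h
        · have := hmin E₂ hE₂F
          have hEq := Finset.eq_of_subset_of_card_le h this
          rw [hEq] at he₂
          exact he₂ he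
        · exact he₂ (h he)
        · exact Finset.disjoint_left.mp h hf'E₂ hf'E₀
      · exfalso
        have hE₁eq : E₁ = E₂.erase e := by
          rw [← h12]; exact (Finset.erase_eq_of_notMem he₁).symm
        have hsub1 : E₀ ⊆ E₂ := hsup E₂ h₂ he₂
        obtain ⟨f', hf'E₀, hf'e⟩ : ∃ f', f' ∈ E₀ ∧ f' ≠ e := by
          rcases eq_or_ne e f with rfl | hnef
          · exact absurd rfl hef
          · exact ⟨f, hf, fun hc => hef (by rw [hc])⟩
        have hf'E₁ : f' ∈ E₁ := by
          rw [hE₁eq]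
          exact Finset.mem_erase.mpr ⟨hf'e, hsub1 hf'E₀⟩
        have hE₁F : E₁ ∈ F := Finset.mem_of_mem_erase h₁
        rcases hlam E₁ hE₁F E₀ hE₀ with h | h | h
        · have := hmin E₁ hE₁F
          have hEq := Finset.eq_of_subset_of_card_le h this
          rw [hEq] at he₁
          exact he₁ he
        · exact he₁ (h he)
        · exact Finset.disjoint_left.mp h hf'E₁ hf'E₀
      · rw [Finset.erase_eq_of_notMem he₁, Finset.erase_eq_of_notMem he₂] at h12
        exact h12
    rcases (F.erase E₀).eq_empty_or_nonempty with hcase | hcase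
    · -- F = {E₀}
      have : F = {E₀} := by
        apply Finset.eq_singleton_iff_unique_mem.mpr
        refine ⟨hE₀, ?_⟩
        intro E hE
        by_contra hne'
        have : E ∈ F.erase E₀ := Finset.mem_erase.mpr ⟨hne', hE⟩
        rw [hcase] at this
        exact absurd this (Finset.notMem_empty E)
      rw [this, Finset.card_singleton]
      have := Finset.card_le_card (hmem E₀ hE₀).1
      omega
    · set F' := (F.erase E₀).image (fun E => E.erase e) with hF'
      have hF'card : F'.card = (F.erase E₀).card := Finset.card_image_of_injOn hinj
      have hU' : (U.erase e).card ≤ k := by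
        rw [Finset.card_erase_of_mem heU]
        omega
      have hmem' : ∀ E' ∈ F', E' ⊆ U.erase e ∧ 2 ≤ E'.card := by
        intro E' hE'
        obtain ⟨E, hE, rfl⟩ := Finset.mem_image.mp hE'
        constructor
        · exact Finset.erase_subset_erase e (hmem E (Finset.mem_of_mem_erase hE)).1
        · by_cases heE : e ∈ E
          · have hsub := hsup E hE heE
            have hEne : E ≠ E₀ := Finset.ne_of_mem_erase hE
            have : E₀ ⊂ E := Finset.ssubset_iff_subset_ne.mpr ⟨hsub, fun hc => hEne hc.symm⟩
            have h3 : E₀.card < E.card := Finset.card_lt_card this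
            rw [Finset.card_erase_of_mem heE]
            omega
          · rw [Finset.erase_eq_of_notMem heE]
            exact (hmem E (Finset.mem_of_mem_erase hE)).2
      have hlam' : ∀ E ∈ F', ∀ E' ∈ F', E ⊆ E' ∨ E' ⊆ E ∨ Disjoint E E' := by
        intro A hA B hB
        obtain ⟨EA, hEA, rfl⟩ := Finset.mem_image.mp hA
        obtain ⟨EB, hEB, rfl⟩ := Finset.mem_image.mp hB
        rcases hlam EA (Finset.mem_of_mem_erase hEA) EB (Finset.mem_of_mem_erase hEB)
          with h | h | h
        · exact Or.inl (Finset.erase_subset_erase e h)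
        · exact Or.inr (Or.inl (Finset.erase_subset_erase e h))
        · exact Or.inr (Or.inr (h.mono (Finset.erase_subset e EA) (Finset.erase_subset e EB)))
      have hne' : F'.Nonempty := hcase.image _
      have := ih (U.erase e) F' hU' hmem' hlam' hne'
      have hFcard : F.card = (F.erase E₀).card + 1 := by
        rw [Finset.card_erase_of_mem hE₀]
        have : 0 < F.card := Finset.card_pos.mpr hne
        omega
      rw [Finset.card_erase_of_mem heU] at this
      have hUpos : 0 < U.card := Finset.card_pos.mpr ⟨e, heU⟩
      omega

/-- The finset of nonempty occurring factors of `x`. -/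
def Fac (x : List α) : Finset (List α) :=
  ((Finset.range (x.length + 1) ×ˢ Finset.range (x.length + 1)).image
    (fun p => (x.drop p.1).take p.2)).filter (fun v => v ≠ [] ∧ 0 < occ x v)

lemma mem_Fac {x v : List α} : v ∈ Fac x ↔ v ≠ [] ∧ 0 < occ x v := by
  unfold Fac
  rw [Finset.mem_filter]
  constructor
  · exact fun h => h.2
  · intro h
    refine ⟨?_, h⟩
    rw [Finset.mem_image]
    have hpos := h.2
    rw [occ_eq_card_SP, Finset.card_pos] at hpos
    obtain ⟨i, hi⟩ := hpos
    have hle := length_add_le_of_mem_SP hi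
    obtain ⟨hi', hp⟩ := mem_SP.mp hi
    refine ⟨(i, v.length), ?_, ?_⟩
    · rw [Finset.mem_product, Finset.mem_range, Finset.mem_range]
      constructor <;> omega
    · exact (List.prefix_iff_eq_take.mp hp).symm

lemma suffix_eq_of_length {x v w : List α} (hv : v <:+ x) (hw : w <:+ x)
    (h : v.length = w.length) : v = w := by
  obtain ⟨pv, hpv⟩ := hv
  obtain ⟨pw, hpw⟩ := hw
  have hx : pv ++ v = pw ++ w := by rw [hpv, hpw]
  have hlen : pv.length = pw.length := by
    have := congrArg List.length hpv
    have := congrArg List.length hpw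
    simp only [List.length_append] at *
    omega
  exact (List.append_inj hx hlen).2

lemma prefix_eq_of_length {x v w : List α} (hv : v <+: x) (hw : w <+: x)
    (h : v.length = w.length) : v = w := by
  rw [List.prefix_iff_eq_take] at hv hw
  rw [hv, hw, h]

section WithFintype

variable [Fintype α]

/-- Letters `a` with `1 ≤ f(a·v) < f(v)`. -/
def CL (x v : List α) : Finset α :=
  Finset.univ.filter (fun a => 0 < occ x (a :: v) ∧ occ x (a :: v) < occ x v)

/-- Letters `b` with `1 ≤ f(v·b) < f(v)`. -/
def CR (x v : List α) : Finset α :=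
  Finset.univ.filter (fun b => 0 < occ x (v ++ [b]) ∧ occ x (v ++ [b]) < occ x v)

/-- Letters `a` with `f(a·v) ≥ 1`. -/
def LD (x v : List α) : Finset α := Finset.univ.filter (fun a => 0 < occ x (a :: v))

/-- Letters `b` with `f(v·b) ≥ 1`. -/
def RD (x v : List α) : Finset α := Finset.univ.filter (fun b => 0 < occ x (v ++ [b]))

lemma CL_subset_LD (x v : List α) : CL x v ⊆ LD x v := by
  intro a ha
  rw [CL, Finset.mem_filter] at ha
  rw [LD, Finset.mem_filter]
  exact ⟨ha.1, ha.2.1⟩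

lemma CR_subset_RD (x v : List α) : CR x v ⊆ RD x v := by
  intro a ha
  rw [CR, Finset.mem_filter] at ha
  rw [RD, Finset.mem_filter]
  exact ⟨ha.1, ha.2.1⟩

/-- A nonempty occurring factor with no occurring right extension is a suffix of `x`. -/
lemma suffix_of_RD_empty {x v : List α} (hv : v ∈ Fac x) (h : (RD x v).card = 0) :
    v <:+ x := by
  obtain ⟨hne, hpos⟩ := mem_Fac.mp hv
  rw [occ_eq_card_SP, Finset.card_pos] at hpos
  obtain ⟨i, hi⟩ := hpos
  have hle := length_add_le_of_mem_SP hi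
  obtain ⟨hi', hp⟩ := mem_SP.mp hi
  rcases Nat.lt_or_ge (i + v.length) x.length with hlt | hge
  · -- extend to the right, contradiction
    exfalso
    have hvlen : v.length < (x.drop i).length := by rw [List.length_drop]; omega
    set b := (x.drop i)[v.length] with hb
    have htake : v ++ [b] = (x.drop i).take (v.length + 1) := by
      rw [← List.take_concat_get hvlen, List.concat_eq_append]
      congr 1
      exact List.prefix_iff_eq_take.mp hp
    have hpre : (v ++ [b]) <+: x.drop i := by
      rw [htake]; exact List.take_prefix _ _
    have : 0 < occ x (v ++ [b]) := by
      rw [occ_eq_card_SP, Finset.card_pos]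
      exact ⟨i, mem_SP.mpr ⟨hi', hpre⟩⟩
    have hmem : b ∈ RD x v := by rw [RD, Finset.mem_filter]; exact ⟨Finset.mem_univ b, this⟩
    rw [Finset.card_eq_zero] at h
    rw [h] at hmem
    exact absurd hmem (Finset.notMem_empty b)
  · have heq : v = x.drop i := by
    
      apply hp.eq_of_length
      rw [List.length_drop]
      omega
    rw [heq]
    exact List.drop_suffix i x

/-- A nonempty occurring factor with no occurring left extension is a prefix of `x`. -/
lemma prefix_of_LD_empty {x v : List α} (hv : v ∈ Fac x) (h : (LD x v).card = 0) :
    v <+: x := by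
  obtain ⟨hne, hpos⟩ := mem_Fac.mp hv
  rw [occ_eq_card_SP, Finset.card_pos] at hpos
  obtain ⟨i, hi⟩ := hpos
  have hle := length_add_le_of_mem_SP hi
  obtain ⟨hi', hp⟩ := mem_SP.mp hi
  rcases Nat.eq_zero_or_pos i with rfl | hipos
  · simpa using hp
  · exfalso
    have hi1 : i - 1 < x.length := by
      have : 0 < v.length := List.length_pos_iff.mpr hne
      omega
    set a := x[i - 1] with ha
    have hi1' : i - 1 + 1 = i := by omega
    have hdrop : x.drop (i - 1) = a :: x.drop i := by
      rw [List.drop_eq_getElem_cons hi1, hi1']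
    have hpre : (a :: v) <+: x.drop (i - 1) := by
      rw [hdrop]
      obtain ⟨t, ht⟩ := hp
      exact ⟨t, by rw [List.cons_append, ht]⟩
    have : 0 < occ x (a :: v) := by
      rw [occ_eq_card_SP, Finset.card_pos]
      exact ⟨i - 1, mem_SP.mpr ⟨by omega, hpre⟩⟩
    have hmem : a ∈ LD x v := by rw [LD, Finset.mem_filter]; exact ⟨Finset.mem_univ a, this⟩
    rw [Finset.card_eq_zero] at h
    rw [h] at hmem
    exact absurd hmem (Finset.notMem_empty a)

lemma card_suffix_filter_le (x : List α) (p : List α → Prop) [DecidablePred p] :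
    (((Fac x).filter p).filter (fun v => v <:+ x)).card ≤ x.length := by
  have : (((Fac x).filter p).filter (fun v => v <:+ x)).card ≤ (Finset.Icc 1 x.length).card := by
    apply Finset.card_le_card_of_injOn (fun v => v.length)
    · intro v hv
      rw [Finset.mem_coe, Finset.mem_filter] at hv
      have h1 := (mem_Fac.mp (Finset.mem_filter.mp hv.1).1).1
      have h2 := hv.2.length_le
      rw [Finset.mem_coe, Finset.mem_Icc]
      exact ⟨List.length_pos_iff.mpr h1, h2⟩
    · intro v hv w hw hlen
      simp only [Finset.coe_filter, Set.mem_setOf_eq] at hv hw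
      exact suffix_eq_of_length hv.2 hw.2 hlen
  simpa [Nat.card_Icc] using this

lemma card_prefix_filter_le (x : List α) (p : List α → Prop) [DecidablePred p] :
    (((Fac x).filter p).filter (fun v => v <+: x)).card ≤ x.length := by
  have : (((Fac x).filter p).filter (fun v => v <+: x)).card ≤ (Finset.Icc 1 x.length).card := by
    apply Finset.card_le_card_of_injOn (fun v => v.length)
    · intro v hv
      rw [Finset.mem_coe, Finset.mem_filter] at hv
      have h1 := (mem_Fac.mp (Finset.mem_filter.mp hv.1).1).1
      have h2 := hv.2.length_le
      rw [Finset.mem_coe, Finset.mem_Icc]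
      exact ⟨List.length_pos_iff.mpr h1, h2⟩
    · intro v hv w hw hlen
      simp only [Finset.coe_filter, Set.mem_setOf_eq] at hv hw
      exact prefix_eq_of_length hv.2 hw.2 hlen
  simpa [Nat.card_Icc] using this

lemma fiber_right {x v : List α} (hv : v ∈ Fac x) :
    ((Fac x).filter (fun u => 2 ≤ u.length)).filter (fun u => u.dropLast = v)
      = (RD x v).image (fun b => v ++ [b]) := by
  ext u
  rw [Finset.mem_filter, Finset.mem_filter, Finset.mem_image]
  constructor
  · rintro ⟨⟨hu, hlen⟩, hdl⟩
    have hne : u ≠ [] := (mem_Fac.mp hu).1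
    refine ⟨u.getLast hne, ?_, ?_⟩
    · rw [RD, Finset.mem_filter]
      refine ⟨Finset.mem_univ _, ?_⟩
      have : v ++ [u.getLast hne] = u := by rw [← hdl]; exact List.dropLast_append_getLast hne
      rw [this]
      exact (mem_Fac.mp hu).2
    · rw [← hdl]; exact List.dropLast_append_getLast hne
  · rintro ⟨b, hb, rfl⟩
    rw [RD, Finset.mem_filter] at hb
    have hvne : v ≠ [] := (mem_Fac.mp hv).1
    refine ⟨⟨mem_Fac.mpr ⟨by simp, hb.2⟩, ?_⟩, List.dropLast_concat⟩
    have : 0 < v.length := List.length_pos_iff.mpr hvne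
    simp only [List.length_append, List.length_singleton]
    omega

lemma fiber_left {x v : List α} (hv : v ∈ Fac x) :
    ((Fac x).filter (fun u => 2 ≤ u.length)).filter (fun u => u.tail = v)
      = (LD x v).image (fun a => a :: v) := by
  ext u
  rw [Finset.mem_filter, Finset.mem_filter, Finset.mem_image]
  constructor
  · rintro ⟨⟨hu, hlen⟩, htl⟩
    have hne : u ≠ [] := (mem_Fac.mp hu).1
    refine ⟨u.head hne, ?_, ?_⟩
    · rw [LD, Finset.mem_filter]
      refine ⟨Finset.mem_univ _, ?_⟩
      have : u.head hne :: v = u := by rw [← htl]; exact List.cons_head_tail hne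
      rw [this]
      exact (mem_Fac.mp hu).2
    · rw [← htl]; exact List.cons_head_tail hne
  · rintro ⟨a, ha, rfl⟩
    rw [LD, Finset.mem_filter] at ha
    have hvne : v ≠ [] := (mem_Fac.mp hv).1
    refine ⟨⟨mem_Fac.mpr ⟨by simp, ha.2⟩, ?_⟩, rfl⟩
    have : 0 < v.length := List.length_pos_iff.mpr hvne
    simp only [List.length_cons]
    omega

lemma sum_RD_eq (x : List α) :
    ∑ v ∈ Fac x, (RD x v).card = ((Fac x).filter (fun u => 2 ≤ u.length)).card := by
  rw [Finset.card_eq_sum_card_fiberwise (f := List.dropLast) (t := Fac x)]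
  · apply Finset.sum_congr rfl
    intro v hv
    rw [fiber_right hv, Finset.card_image_of_injective]
    intro b b' hbb
    simpa using hbb
  · intro u hu
    rw [Finset.mem_coe, Finset.mem_filter] at hu
    have hne : u ≠ [] := (mem_Fac.mp hu.1).1
    apply mem_Fac.mpr
    constructor
    · intro hcon
      have := congrArg List.length hcon
      rw [List.length_dropLast] at this
      simp at this
      omega
    · exact lt_of_lt_of_le (mem_Fac.mp hu.1).2 (occ_le_of_prefix (List.dropLast_prefix u))

lemma sum_LD_eq (x : List α) :
    ∑ v ∈ Fac x, (LD x v).card = ((Fac x).filter (fun u => 2 ≤ u.length)).card := by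
  rw [Finset.card_eq_sum_card_fiberwise (f := List.tail) (t := Fac x)]
  · apply Finset.sum_congr rfl
    intro v hv
    rw [fiber_left hv, Finset.card_image_of_injective]
    intro a a' haa
    simpa using haa
  · intro u hu
    rw [Finset.mem_coe, Finset.mem_filter] at hu
    have hne : u ≠ [] := (mem_Fac.mp hu.1).1
    apply mem_Fac.mpr
    constructor
    · intro hcon
      have := congrArg List.length hcon
      rw [List.length_tail] at this
      simp at this
      omega
    · have hu2 : u = u.head hne :: u.tail := (List.cons_head_tail hne).symm
      have : occ x u ≤ occ x u.tail := by
        conv_lhs => rw [hu2]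
        exact occ_cons_le
      exact lt_of_lt_of_le (mem_Fac.mp hu.1).2 this

lemma sum_RD_sub_one_le (x : List α) :
    ∑ v ∈ (Fac x).filter (fun v => 0 < (RD x v).card), ((RD x v).card - 1) ≤ x.length := by
  set H := (Fac x).filter (fun v => 0 < (RD x v).card) with hH
  have h1 : ∑ v ∈ H, ((RD x v).card - 1) + H.card = ∑ v ∈ H, (RD x v).card := by
    have e1 : ∑ v ∈ H, ((RD x v).card - 1 + 1) = ∑ v ∈ H, (RD x v).card :=
      Finset.sum_congr rfl (fun v hv => by
        have := (Finset.mem_filter.mp hv).2; omega)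
    rw [Finset.sum_add_distrib] at e1
    simpa using e1
  have h2 : ∑ v ∈ H, (RD x v).card = ∑ v ∈ Fac x, (RD x v).card := by
    apply Finset.sum_filter_of_ne
    intro v _ hne
    exact Nat.pos_of_ne_zero hne
  have h4 := Finset.card_filter_add_card_filter_not (s := Fac x)
    (fun u => 2 ≤ u.length)
  have h5 := Finset.card_filter_add_card_filter_not (s := Fac x)
    (fun v => 0 < (RD x v).card)
  have h6 : ((Fac x).filter (fun v => ¬ 0 < (RD x v).card)).card ≤ x.length := by
    have hsub : (Fac x).filter (fun v => ¬ 0 < (RD x v).card) ⊆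
        (((Fac x).filter (fun v => ¬ 0 < (RD x v).card)).filter (fun v => v <:+ x)) := by
      intro v hv
      rw [Finset.mem_filter]
      refine ⟨hv, ?_⟩
      rw [Finset.mem_filter] at hv
      exact suffix_of_RD_empty hv.1 (by omega)
    exact le_trans (Finset.card_le_card hsub) (card_suffix_filter_le x _)
  have h3 := sum_RD_eq x
  rw [← hH] at h5
  omega

lemma sum_LD_sub_one_le (x : List α) :
    ∑ v ∈ (Fac x).filter (fun v => 0 < (LD x v).card), ((LD x v).card - 1) ≤ x.length := by
  set H := (Fac x).filter (fun v => 0 < (LD x v).card) with hH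
  have h1 : ∑ v ∈ H, ((LD x v).card - 1) + H.card = ∑ v ∈ H, (LD x v).card := by
    have e1 : ∑ v ∈ H, ((LD x v).card - 1 + 1) = ∑ v ∈ H, (LD x v).card :=
      Finset.sum_congr rfl (fun v hv => by
        have := (Finset.mem_filter.mp hv).2; omega)
    rw [Finset.sum_add_distrib] at e1
    simpa using e1
  have h2 : ∑ v ∈ H, (LD x v).card = ∑ v ∈ Fac x, (LD x v).card := by
    apply Finset.sum_filter_of_ne
    intro v _ hne
    exact Nat.pos_of_ne_zero hne
  have h4 := Finset.card_filter_add_card_filter_not (s := Fac x)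
    (fun u => 2 ≤ u.length)
  have h5 := Finset.card_filter_add_card_filter_not (s := Fac x)
    (fun v => 0 < (LD x v).card)
  have h6 : ((Fac x).filter (fun v => ¬ 0 < (LD x v).card)).card ≤ x.length := by
    have hsub : (Fac x).filter (fun v => ¬ 0 < (LD x v).card) ⊆
        (((Fac x).filter (fun v => ¬ 0 < (LD x v).card)).filter (fun v => v <+: x)) := by
      intro v hv
      rw [Finset.mem_filter]
      refine ⟨hv, ?_⟩
      rw [Finset.mem_filter] at hv
      exact prefix_of_LD_empty hv.1 (by omega)
    exact le_trans (Finset.card_le_card hsub) (card_prefix_filter_le x _)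
  have h3 := sum_LD_eq x
  rw [← hH] at h5
  omega

end WithFintype

/-- End positions (one past the last letter) of occurrences of `v` in `x`. -/
def EP (x v : List α) : Finset ℕ := (SP x v).image (fun i => i + v.length)

lemma card_EP (x v : List α) : (EP x v).card = occ x v := by
  rw [EP, Finset.card_image_of_injective _ (add_left_injective v.length), occ_eq_card_SP]

lemma EP_subset_Icc {x v : List α} (hne : v ≠ []) : EP x v ⊆ Finset.Icc 1 x.length := by
  intro j hj
  obtain ⟨i, hi, rfl⟩ := Finset.mem_image.mp hj
  have h1 := length_add_le_of_mem_SP hi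
  have h2 : 0 < v.length := List.length_pos_iff.mpr hne
  rw [Finset.mem_Icc]
  omega

lemma EP_anti_suffix {x v v' : List α} (h : v <:+ v') : EP x v' ⊆ EP x v := by
  intro j hj
  obtain ⟨i, hi, rfl⟩ := Finset.mem_image.mp hj
  obtain ⟨u, hu⟩ := h
  obtain ⟨hile, t, ht⟩ := mem_SP.mp hi
  have hdrop : x.drop (i + u.length) = v ++ t := by
    rw [← List.drop_drop, ← ht, ← hu, List.append_assoc, List.drop_left]
  have hmem : i + u.length ∈ SP x v := by
    apply mem_SP.mpr
    have h1 : i + v'.length ≤ x.length := by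
      have := length_add_le_of_mem_SP hi
      omega
    have h2 : v'.length = u.length + v.length := by rw [← hu]; simp
    exact ⟨by omega, ⟨t, hdrop.symm⟩⟩
  apply Finset.mem_image.mpr
  refine ⟨i + u.length, hmem, ?_⟩
  have h2 : v'.length = u.length + v.length := by rw [← hu]; simp
  omega

lemma suffix_of_common_end {x v v' : List α} {j : ℕ} (hj : j ∈ EP x v) (hj' : j ∈ EP x v')
    (hlen : v.length ≤ v'.length) : v <:+ v' := by
  obtain ⟨i, hi, hij⟩ := Finset.mem_image.mp hj
  obtain ⟨i', hi', hij'⟩ := Finset.mem_image.mp hj'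
  obtain ⟨hile, hp⟩ := mem_SP.mp hi
  obtain ⟨hile', t', ht'⟩ := mem_SP.mp hi'
  set d := v'.length - v.length with hd
  have hii : i = i' + d := by omega
  have hdle : d ≤ v'.length := by omega
  have hdropi : x.drop i = v'.drop d ++ t' := by
    rw [hii, ← List.drop_drop, ← ht', List.drop_append_of_le_length hdle]
  have hpre2 : v'.drop d <+: x.drop i := ⟨t', hdropi.symm⟩
  have heq : v = v'.drop d := by
    apply prefix_eq_of_length hp hpre2
    rw [List.length_drop]
    omega
  rw [heq]
  exact List.drop_suffix d v'

section WithFintype2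

variable [Fintype α]

lemma EP_injOn_special {x : List α} :
    Set.InjOn (EP x) ↑((Fac x).filter (fun v => 0 < (CL x v).card ∧ 0 < (CR x v).card)) := by
  -- auxiliary: asymmetric version
  have key : ∀ v v' : List α, v ∈ Fac x → 0 < (CL x v).card →
      EP x v = EP x v' → v.length ≤ v'.length → v = v' := by
    intro v v' hv hCL hEP hlen
    have hvpos := (mem_Fac.mp hv).2
    have hEPne : (EP x v).Nonempty := by
      rw [← Finset.card_pos, card_EP]; exact hvpos
    obtain ⟨j, hjv⟩ := hEPne
    have hjv' : j ∈ EP x v' := hEP ▸ hjv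
    have hsfx : v <:+ v' := suffix_of_common_end hjv hjv' hlen
    rcases Nat.eq_or_lt_of_le hlen with heq | hlt
    · exact hsfx.eq_of_length heq
    · exfalso
      obtain ⟨u, hu⟩ := hsfx
      have hune : u ≠ [] := by
        intro hc
        rw [hc] at hu
        simp at hu
        rw [hu] at hlt
        omega
      set a := u.getLast hune with ha
      have hu2 : u.dropLast ++ [a] = u := List.dropLast_append_getLast hune
      have hsfx2 : (a :: v) <:+ v' := by
        refine ⟨u.dropLast, ?_⟩
        rw [← hu, ← hu2]
        simp
      have hocc1 : occ x v' ≤ occ x (a :: v) := by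
        rw [occ_eq_card_SP, occ_eq_card_SP]
        calc (SP x v').card = (EP x v').card := (card_EP x v' ▸ (occ_eq_card_SP x v') ▸ rfl)
          _ ≤ (EP x (a :: v)).card := Finset.card_le_card (EP_anti_suffix hsfx2)
          _ = (SP x (a :: v)).card := by rw [card_EP, occ_eq_card_SP]
      have hocc2 : occ x (a :: v) ≤ occ x v := occ_cons_le
      have hocc3 : occ x v = occ x v' := by
        rw [← card_EP, ← card_EP, hEP]
      -- now use CL witness
      obtain ⟨a₀, ha₀⟩ := Finset.card_pos.mp hCL
      rw [CL, Finset.mem_filter] at ha₀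
      obtain ⟨-, ha₀pos, ha₀lt⟩ := ha₀
      have hane : a₀ ≠ a := by
        intro hc
        rw [hc] at ha₀lt ha₀pos
        omega
      have := occ_cons_add_occ_cons_le (x := x) (v := v) hane.symm
      omega
  intro v hv v' hv' hEP
  simp only [Finset.coe_filter, Set.mem_setOf_eq] at hv hv'
  rcases le_total v.length v'.length with h | h
  · exact key v v' hv.1 hv.2.1 hEP h
  · exact (key v' v hv'.1 hv'.2.1 hEP.symm h).symm

lemma card_special_le (x : List α) :
    ((Fac x).filter (fun v => 0 < (CL x v).card ∧ 0 < (CR x v).card)).card ≤ x.length := by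
  set B := (Fac x).filter (fun v => 0 < (CL x v).card ∧ 0 < (CR x v).card) with hB
  rcases B.eq_empty_or_nonempty with hBe | hBne
  · rw [hBe]; simp
  have hcard : (B.image (EP x)).card = B.card := Finset.card_image_of_injOn EP_injOn_special
  have hlt : (B.image (EP x)).card < (Finset.Icc 1 x.length).card := by
    apply laminar_bound (Finset.Icc 1 x.length).card _ _ le_rfl
    · intro E hE
      obtain ⟨v, hv, rfl⟩ := Finset.mem_image.mp hE
      rw [hB, Finset.mem_filter] at hv
      obtain ⟨hvF, hCL, hCR⟩ := hv
      constructor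
      · exact EP_subset_Icc (mem_Fac.mp hvF).1
      · rw [card_EP]
        obtain ⟨b, hb⟩ := Finset.card_pos.mp hCR
        rw [CR, Finset.mem_filter] at hb
        omega
    · intro E hE E' hE'
      obtain ⟨v, hv, rfl⟩ := Finset.mem_image.mp hE
      obtain ⟨v', hv', rfl⟩ := Finset.mem_image.mp hE'
      rcases Finset.disjoint_or_nonempty_inter (EP x v) (EP x v') with hd | hd
      · exact Or.inr (Or.inr hd)
      obtain ⟨j, hj⟩ := hd
      rw [Finset.mem_inter] at hj
      rcases le_total v.length v'.length with h | h
      · exact Or.inr (Or.inl (EP_anti_suffix (suffix_of_common_end hj.1 hj.2 h)))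
      · exact Or.inl (EP_anti_suffix (suffix_of_common_end hj.2 hj.1 h))
    · exact hBne.image _
  rw [hcard, Nat.card_Icc] at hlt
  omega

end WithFintype2

section Main

variable [Fintype α]

/-- All candidate avoided words `a·v·b`. -/
def Bad (x : List α) : Finset (List α) :=
  ((Fac x).sigma (fun v => (CL x v) ×ˢ (CR x v))).image
    (fun p => p.2.1 :: (p.1 ++ [p.2.2]))

lemma card_Bad_le (x : List α) :
    (Bad x).card ≤ Fintype.card α * x.length + 2 * x.length := by
  have h1 : (Bad x).card ≤ ∑ v ∈ Fac x, (CL x v).card * (CR x v).card := by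
    calc (Bad x).card ≤ ((Fac x).sigma (fun v => (CL x v) ×ˢ (CR x v))).card :=
          Finset.card_image_le
      _ = ∑ v ∈ Fac x, (CL x v).card * (CR x v).card := by
          rw [Finset.card_sigma]
          exact Finset.sum_congr rfl (fun v _ => Finset.card_product _ _)
  set B := (Fac x).filter (fun v => 0 < (CL x v).card ∧ 0 < (CR x v).card) with hBdef
  have h2 : ∑ v ∈ Fac x, (CL x v).card * (CR x v).card
      = ∑ v ∈ B, (CL x v).card * (CR x v).card := by
    symm
    apply Finset.sum_filter_of_ne
    intro v _ hne
    constructor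
    · rcases Nat.eq_zero_or_pos (CL x v).card with h | h
      · exact absurd (by rw [h, Nat.zero_mul]) hne
      · exact h
    · rcases Nat.eq_zero_or_pos (CR x v).card with h | h
      · exact absurd (by rw [h, Nat.mul_zero]) hne
      · exact h
  have h3 : ∀ v ∈ B, (CL x v).card * (CR x v).card
      ≤ Fintype.card α * ((CR x v).card - 1) + (((CL x v).card - 1) + 1) := by
    intro v hv
    rw [hBdef, Finset.mem_filter] at hv
    obtain ⟨-, hL, hR⟩ := hv
    have hLσ : (CL x v).card ≤ Fintype.card α := by
      rw [← Finset.card_univ]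
      exact Finset.card_le_univ _
    obtain ⟨cR', hcR'⟩ : ∃ m, (CR x v).card = m + 1 := ⟨(CR x v).card - 1, by omega⟩
    obtain ⟨cL', hcL'⟩ : ∃ m, (CL x v).card = m + 1 := ⟨(CL x v).card - 1, by omega⟩
    rw [hcR', hcL', Nat.add_sub_cancel, Nat.add_sub_cancel]
    rw [hcL'] at hLσ
    calc (cL' + 1) * (cR' + 1) = (cL' + 1) * cR' + (cL' + 1) := by ring
      _ ≤ Fintype.card α * cR' + (cL' + 1) :=
          Nat.add_le_add_right (Nat.mul_le_mul_right cR' hLσ) _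
  have h4 : ∑ v ∈ B, (CL x v).card * (CR x v).card
      ≤ Fintype.card α * (∑ v ∈ B, ((CR x v).card - 1))
        + ((∑ v ∈ B, ((CL x v).card - 1)) + B.card) := by
    calc ∑ v ∈ B, (CL x v).card * (CR x v).card
        ≤ ∑ v ∈ B, (Fintype.card α * ((CR x v).card - 1) + (((CL x v).card - 1) + 1)) :=
          Finset.sum_le_sum h3
      _ = Fintype.card α * (∑ v ∈ B, ((CR x v).card - 1))
          + ((∑ v ∈ B, ((CL x v).card - 1)) + B.card) := by
          rw [Finset.sum_add_distrib, Finset.mul_sum, Finset.sum_add_distrib]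
          congr 1
          rw [Finset.sum_const, smul_eq_mul, mul_one]
  have hsubR : B ⊆ (Fac x).filter (fun v => 0 < (RD x v).card) := by
    intro v hv
    rw [hBdef, Finset.mem_filter] at hv
    rw [Finset.mem_filter]
    refine ⟨hv.1, ?_⟩
    obtain ⟨b, hb⟩ := Finset.card_pos.mp hv.2.2
    exact Finset.card_pos.mpr ⟨b, CR_subset_RD x v hb⟩
  have hsubL : B ⊆ (Fac x).filter (fun v => 0 < (LD x v).card) := by
    intro v hv
    rw [hBdef, Finset.mem_filter] at hv
    rw [Finset.mem_filter]
    refine ⟨hv.1, ?_⟩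
    obtain ⟨a, ha⟩ := Finset.card_pos.mp hv.2.1
    exact Finset.card_pos.mpr ⟨a, CL_subset_LD x v ha⟩
  have h5 : ∑ v ∈ B, ((CR x v).card - 1) ≤ x.length := by
    calc ∑ v ∈ B, ((CR x v).card - 1)
        ≤ ∑ v ∈ B, ((RD x v).card - 1) := by
          apply Finset.sum_le_sum
          intro v _
          have := Finset.card_le_card (CR_subset_RD x v)
          omega
      _ ≤ ∑ v ∈ (Fac x).filter (fun v => 0 < (RD x v).card), ((RD x v).card - 1) :=
          Finset.sum_le_sum_of_subset hsubR
      _ ≤ x.length := sum_RD_sub_one_le x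
  have h6 : ∑ v ∈ B, ((CL x v).card - 1) ≤ x.length := by
    calc ∑ v ∈ B, ((CL x v).card - 1)
        ≤ ∑ v ∈ B, ((LD x v).card - 1) := by
          apply Finset.sum_le_sum
          intro v _
          have := Finset.card_le_card (CL_subset_LD x v)
          omega
      _ ≤ ∑ v ∈ (Fac x).filter (fun v => 0 < (LD x v).card), ((LD x v).card - 1) :=
          Finset.sum_le_sum_of_subset hsubL
      _ ≤ x.length := sum_LD_sub_one_le x
  have h7 : B.card ≤ x.length := card_special_le x
  have hmul : Fintype.card α * (∑ v ∈ B, ((CR x v).card - 1)) ≤ Fintype.card α * x.length :=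
    Nat.mul_le_mul_left _ h5
  omega

lemma mem_Bad_of_avoided {x w : List α} {ρ : ℝ} (hρ : ρ < 0) (hlen : 2 < w.length)
    (h : stdDev x w ≤ ρ) : w ∈ Bad x := by
  -- decompose w = a :: (v ++ [b])
  have hwne : w ≠ [] := by intro hc; rw [hc] at hlen; simp at hlen
  obtain ⟨a, t, rfl⟩ := List.exists_cons_of_ne_nil hwne
  have htne : t ≠ [] := by
    intro hc
    rw [hc] at hlen
    simp at hlen
  rcases List.eq_nil_or_concat t with hc | ⟨v, b, rfl⟩
  · exact absurd hc htne
  rw [List.concat_eq_append] at *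
  have hvne : v ≠ [] := by
    intro hc
    rw [hc] at hlen
    simp at hlen
  -- identify the pieces
  have hwp : (a :: (v ++ [b])).dropLast = a :: v := by
    rw [show a :: (v ++ [b]) = (a :: v) ++ [b] by simp, List.dropLast_concat]
  have hws : (a :: (v ++ [b])).tail = v ++ [b] := rfl
  have hwi : (a :: (v ++ [b])).tail.dropLast = v := by
    rw [hws, List.dropLast_concat]
  -- standard deviation analysis
  have hstd : stdDev x (a :: (v ++ [b])) < 0 := lt_of_le_of_lt h hρ
  rw [stdDev] at hstd
  have hden : (0 : ℝ) < max (Real.sqrt (expFreq x (a :: (v ++ [b])))) 1 :=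
    lt_of_lt_of_le one_pos (le_max_right _ _)
  have hnum : (occ x (a :: (v ++ [b])) : ℝ) - expFreq x (a :: (v ++ [b])) < 0 := by
    by_contra hcon
    push_neg at hcon
    exact absurd hstd (not_lt.mpr (div_nonneg hcon (le_of_lt hden)))
  have hElt : (occ x (a :: (v ++ [b])) : ℝ) < expFreq x (a :: (v ++ [b])) := by linarith
  have hEpos : 0 < expFreq x (a :: (v ++ [b])) :=
    lt_of_le_of_lt (Nat.cast_nonneg _) hElt
  rw [expFreq, hwp] at hElt hEpos
  simp only [List.tail_cons, List.dropLast_concat] at hElt hEpos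
  by_cases hvpos : 0 < occ x v
  swap
  · rw [if_neg hvpos] at hEpos
    exact absurd hEpos (lt_irrefl 0)
  rw [if_pos hvpos] at hElt
  have hvposR : (0 : ℝ) < (occ x v : ℝ) := by exact_mod_cast hvpos
  have hmulR : (occ x (a :: (v ++ [b])) : ℝ) * (occ x v : ℝ)
      < (occ x (a :: v) : ℝ) * (occ x (v ++ [b]) : ℝ) :=
    (lt_div_iff₀ hvposR).mp hElt
  have hmulN : occ x (a :: (v ++ [b])) * occ x v
      < occ x (a :: v) * occ x (v ++ [b]) := by exact_mod_cast hmulR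
  -- positivity of the extensions
  have hapos : 0 < occ x (a :: v) := by
    rcases Nat.eq_zero_or_pos (occ x (a :: v)) with hz | h
    · rw [hz] at hmulN; simp at hmulN
    · exact h
  have hbpos : 0 < occ x (v ++ [b]) := by
    rcases Nat.eq_zero_or_pos (occ x (v ++ [b])) with hz | h
    · rw [hz] at hmulN; simp at hmulN
    · exact h
  -- strict inequalities
  have hie := occ_incl_excl x v a b
  have halt : occ x (a :: v) < occ x v := by
    rcases Nat.lt_or_ge (occ x (a :: v)) (occ x v) with h | h
    · exact h
    · exfalso
      have heq : occ x (a :: v) = occ x v := le_antisymm occ_cons_le h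
      have hb_le : occ x (v ++ [b]) ≤ occ x (a :: (v ++ [b])) := by omega
      have : occ x (a :: v) * occ x (v ++ [b]) ≤ occ x (a :: (v ++ [b])) * occ x v := by
        rw [heq]
        calc occ x v * occ x (v ++ [b]) ≤ occ x v * occ x (a :: (v ++ [b])) :=
              Nat.mul_le_mul_left _ hb_le
          _ = occ x (a :: (v ++ [b])) * occ x v := Nat.mul_comm _ _
      omega
  have hblt : occ x (v ++ [b]) < occ x v := by
    rcases Nat.lt_or_ge (occ x (v ++ [b])) (occ x v) with h | h
    · exact h
    · exfalso
      have heq : occ x (v ++ [b]) = occ x v :=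
        le_antisymm (occ_le_of_prefix (List.prefix_append v [b])) h
      have ha_le : occ x (a :: v) ≤ occ x (a :: (v ++ [b])) := by omega
      have : occ x (a :: v) * occ x (v ++ [b]) ≤ occ x (a :: (v ++ [b])) * occ x v := by
        rw [heq]
        exact Nat.mul_le_mul_right _ ha_le
      omega
  -- assemble membership
  rw [Bad, Finset.mem_image]
  refine ⟨⟨v, (a, b)⟩, ?_, rfl⟩
  rw [Finset.mem_sigma, Finset.mem_product]
  refine ⟨mem_Fac.mpr ⟨hvne, hvpos⟩, ?_, ?_⟩
  · rw [CL, Finset.mem_filter]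
    exact ⟨Finset.mem_univ a, hapos, halt⟩
  · rw [CR, Finset.mem_filter]
    exact ⟨Finset.mem_univ b, hbpos, hblt⟩

end Main

end Stmt17Aux

/-- Let `ρ < 0`. The total number of `ρ`-avoided words `w` in `x` with
`|w| > 2` (of any length, occurring or absent) is at most `σ·n + 2n`. -/
theorem stmt_17 {α : Type*} [DecidableEq α] [Fintype α] (σ : ℕ)
    (hσ : Fintype.card α = σ) (ρ : ℝ) (hρ : ρ < 0) (x : List α) :
    {w : List α | 2 < w.length ∧ stdDev x w ≤ ρ}.Finite ∧
    {w : List α | 2 < w.length ∧ stdDev x w ≤ ρ}.ncard ≤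
      σ * x.length + 2 * x.length := by
  classical
  have hsub : {w : List α | 2 < w.length ∧ stdDev x w ≤ ρ} ⊆ ↑(Stmt17Aux.Bad x) := by
    intro w hw
    exact Finset.mem_coe.mpr (Stmt17Aux.mem_Bad_of_avoided hρ hw.1 hw.2)
  refine ⟨Set.Finite.subset (Stmt17Aux.Bad x).finite_toSet hsub, ?_⟩
  calc {w : List α | 2 < w.length ∧ stdDev x w ≤ ρ}.ncard
      ≤ (↑(Stmt17Aux.Bad x) : Set (List α)).ncard :=
        Set.ncard_le_ncard hsub (Stmt17Aux.Bad x).finite_toSet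
    _ = (Stmt17Aux.Bad x).card := Set.ncard_coe_finset _
    _ ≤ Fintype.card α * x.length + 2 * x.length := Stmt17Aux.card_Bad_le x
    _ = σ * x.length + 2 * x.length := by rw [hσ]
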